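/- Let D₁, D₂ ≥ 1 and k ≥ 1 be integers, and regard each tensor factor of ((ℂ^{D₁} ⊗ ℂ^{D₂}))^{⊗k} as split into a ℂ^{D₁} part and a ℂ^{D₂} part. For every permutation g ∈ S_k, the partial trace of the permutation operator P_{D₁D₂}(g) over all k of the ℂ^{D₂} factors equals D₂^{l(g)} · P_{D₁}(g). -/

import Mathlib

open Matrix

/-- Number of cycles of a permutation, counting fixed points as cycles of length 1. -/
def cycleCount {k : ℕ} (g : Equiv.Perm (Fin k)) : ℕ :=
  g.cycleType.card + (k - g.support.card)

/-- The permutation operator `P(g)` on the `k`-fold tensor power of `ℂ^I` (for a finite index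
type `I`), defined on the standard tensor basis by `P(g) |i_1,…,i_k⟩ = |i_{g(1)},…,i_{g(k)}⟩`.
Taking `I = Fin D` gives `P_D(g)`, and taking `I = Fin D₁ × Fin D₂` gives `P_{D₁D₂}(g)` under
the standard (lexicographic) identification `ℂ^{D₁} ⊗ ℂ^{D₂} ≅ ℂ^{D₁D₂}`. -/
def permMatrixOn (I : Type*) [DecidableEq I] {k : ℕ} (g : Equiv.Perm (Fin k)) :
    Matrix (Fin k → I) (Fin k → I) ℂ :=
  fun r c => if r = fun a => c (g a) then 1 else 0

section aux

variable {k D₂ : ℕ} (g : Equiv.Perm (Fin k))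

/-- The same-cycle setoid. -/
def scSetoid : Setoid (Fin k) :=
  ⟨g.SameCycle, ⟨fun _ => Equiv.Perm.SameCycle.refl g _,
    Equiv.Perm.SameCycle.symm, Equiv.Perm.SameCycle.trans⟩⟩

lemma invariant_of_fixed {b : Fin k → Fin D₂} (hb : ∀ a, b a = b (g a)) :
    ∀ x y : Fin k, g.SameCycle x y → b x = b y := by
  have key : ∀ n : ℤ, ∀ a, b ((g ^ n) a) = b a := by
    intro n
    induction n using Int.induction_on with
    | zero => simp
    | succ n ih =>
        intro a
        have h1 : (g ^ ((n : ℤ) + 1)) a = (g ^ (n : ℤ)) (g a) := by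
          rw [_root_.zpow_add_one]; rfl
        rw [h1, ih, ← hb]
    | pred n ih =>
        intro a
        have h1 : (g ^ (-(n : ℤ) - 1)) a = (g ^ (-(n : ℤ))) (g⁻¹ a) := by
          rw [_root_.zpow_sub_one]; rfl
        rw [h1, ih, hb (g⁻¹ a), ← Equiv.Perm.mul_apply, mul_inv_cancel, Equiv.Perm.one_apply]
  rintro x y ⟨n, rfl⟩
  exact (key n x).symm

def orbφ (x : Fin k) : (↥g.cycleFactorsFinset ⊕ {x : Fin k // g x = x}) :=
  if h : g x = x then Sum.inr ⟨x, h⟩ else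
    Sum.inl ⟨g.cycleOf x,
      Equiv.Perm.cycleOf_mem_cycleFactorsFinset_iff.2 (Equiv.Perm.mem_support.2 h)⟩

lemma orbφ_const {x y : Fin k} (hxy : g.SameCycle x y) : orbφ g x = orbφ g y := by
  by_cases hx : g x = x
  · obtain rfl := hxy.eq_of_left hx
    rfl
  · have hy : ¬ g y = y := fun hy' => hx (hxy.apply_eq_self_iff.2 hy')
    rw [orbφ, dif_neg hx, orbφ, dif_neg hy]
    exact congrArg _ (Subtype.ext hxy.cycleOf_eq)

/-- Orbits are in bijection with (nontrivial cycles) ⊕ (fixed points). -/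
noncomputable def orbitEquiv :
    Quotient (scSetoid g) ≃ (↥g.cycleFactorsFinset ⊕ {x : Fin k // g x = x}) := by
  classical
  refine Equiv.ofBijective (Quotient.lift (orbφ g) fun x y h => orbφ_const g h) ⟨?_, ?_⟩
  · intro q₁ q₂
    induction q₁ using Quotient.ind with | _ x =>
    induction q₂ using Quotient.ind with | _ y =>
    intro h
    simp only [Quotient.lift_mk] at h
    refine Quotient.sound ?_
    rw [orbφ, orbφ] at h
    by_cases hx : g x = x
    · by_cases hy : g y = y
      · rw [dif_pos hx, dif_pos hy] at h
        obtain rfl : x = y := Subtype.ext_iff.1 (Sum.inr.inj h)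
        exact Equiv.Perm.SameCycle.refl g x
      · rw [dif_pos hx, dif_neg hy] at h
        exact absurd h (by simp)
    · by_cases hy : g y = y
      · rw [dif_neg hx, dif_pos hy] at h
        exact absurd h (by simp)
      · rw [dif_neg hx, dif_neg hy] at h
        have hcyc : g.cycleOf x = g.cycleOf y := Subtype.ext_iff.1 (Sum.inl.inj h)
        have hmem : y ∈ (g.cycleOf y).support :=
          Equiv.Perm.mem_support_cycleOf_iff.2
            ⟨Equiv.Perm.SameCycle.refl g y, Equiv.Perm.mem_support.2 hy⟩
        rw [← hcyc] at hmem
        exact (Equiv.Perm.mem_support_cycleOf_iff.1 hmem).1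
  · rintro (⟨c, hc⟩ | ⟨x, hx⟩)
    · obtain ⟨hcyc, hsupp⟩ := Equiv.Perm.mem_cycleFactorsFinset_iff.1 hc
      obtain ⟨x, hxc⟩ := hcyc.nonempty_support
      have hgx : ¬ g x = x := by
        rw [← hsupp x hxc]
        exact Equiv.Perm.mem_support.1 hxc
      refine ⟨Quotient.mk _ x, ?_⟩
      rw [Quotient.lift_mk, orbφ, dif_neg hgx]
      exact congrArg _ (Subtype.ext (Equiv.Perm.cycle_is_cycleOf hxc hc).symm)
    · exact ⟨Quotient.mk _ x, by rw [Quotient.lift_mk, orbφ, dif_pos hx]⟩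

end aux

/-- Tracing out all `k` of the `ℂ^{D₂}` factors from the permutation operator `P_{D₁D₂}(g)`
on `((ℂ^{D₁} ⊗ ℂ^{D₂}))^{⊗k}` yields `D₂^{l(g)} · P_{D₁}(g)`. -/
theorem partialTrace_permMatrix (D₁ D₂ k : ℕ) (hD₁ : 1 ≤ D₁) (hD₂ : 1 ≤ D₂) (hk : 1 ≤ k)
    (g : Equiv.Perm (Fin k)) :
    (fun (r c : Fin k → Fin D₁) => ∑ b : Fin k → Fin D₂,
        permMatrixOn (Fin D₁ × Fin D₂) g (fun a => (r a, b a)) (fun a => (c a, b a)))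
      = ((D₂ : ℂ) ^ cycleCount g) • permMatrixOn (Fin D₁) g := by
  classical
  funext r c
  have hsplit : ∀ b : Fin k → Fin D₂,
      permMatrixOn (Fin D₁ × Fin D₂) g (fun a => (r a, b a)) (fun a => (c a, b a)) =
      (if r = fun a => c (g a) then (1:ℂ) else 0) *
        (if b = fun a => b (g a) then (1:ℂ) else 0) := by
    intro b
    rw [permMatrixOn]
    by_cases h1 : r = fun a => c (g a)
    · by_cases h2 : b = fun a => b (g a)
      · rw [if_pos h1, if_pos h2, if_pos, one_mul]
        funext a; exact Prod.ext (congrFun h1 a) (congrFun h2 a)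
      · rw [if_pos h1, if_neg h2, if_neg, one_mul]
        intro h; exact h2 (funext fun a => congrArg Prod.snd (congrFun h a))
    · rw [if_neg h1, zero_mul, if_neg]
      intro h; exact h1 (funext fun a => congrArg Prod.fst (congrFun h a))
  -- count the fixed functions
  have hcard : Fintype.card {b : Fin k → Fin D₂ // b = fun a => b (g a)}
      = D₂ ^ cycleCount g := by
    have E : {b : Fin k → Fin D₂ // b = fun a => b (g a)}
        ≃ (Quotient (scSetoid g) → Fin D₂) :=
      { toFun := fun b => Quotient.lift b.1
          (invariant_of_fixed g (fun a => congrFun b.2 a))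
        invFun := fun f => ⟨fun a => f (Quotient.mk _ a),
          funext fun a => congrArg f (Quotient.sound ⟨1, by simp⟩)⟩
        left_inv := fun b => rfl
        right_inv := fun f => funext fun q => by
          induction q using Quotient.ind with | _ a => rfl }
    rw [Fintype.card_congr E, Fintype.card_fun, Fintype.card_fin]
    congr 1
    rw [Fintype.card_congr (orbitEquiv g), Fintype.card_sum, Fintype.card_coe,
      Fintype.card_subtype]
    have h1 : Multiset.card g.cycleType = g.cycleFactorsFinset.card := by
      rw [Equiv.Perm.cycleType_def, Multiset.card_map]; rfl
    have h2 : (Finset.univ.filter fun x => g x = x).card = k - g.support.card := by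
      have h3 := Finset.card_filter_add_card_filter_not
        (s := (Finset.univ : Finset (Fin k))) (p := fun x => g x = x)
      have h4 : (Finset.univ.filter fun x => ¬ g x = x) = g.support := by
        ext x; simp [Equiv.Perm.mem_support]
      rw [h4, Finset.card_univ, Fintype.card_fin] at h3
      omega
    rw [cycleCount, h1, h2]
  calc (∑ b : Fin k → Fin D₂,
        permMatrixOn (Fin D₁ × Fin D₂) g (fun a => (r a, b a)) (fun a => (c a, b a)))
      = ∑ b : Fin k → Fin D₂, (if r = fun a => c (g a) then (1:ℂ) else 0) *
          (if b = fun a => b (g a) then (1:ℂ) else 0) :=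
        Finset.sum_congr rfl fun b _ => hsplit b
    _ = (if r = fun a => c (g a) then (1:ℂ) else 0) *
          ∑ b : Fin k → Fin D₂, (if b = fun a => b (g a) then (1:ℂ) else 0) := by
        rw [Finset.mul_sum]
    _ = (if r = fun a => c (g a) then (1:ℂ) else 0) * (D₂ : ℂ) ^ cycleCount g := by
        rw [Finset.sum_boole, ← Fintype.card_subtype, hcard]
        push_cast
        ring
    _ = ((D₂ : ℂ) ^ cycleCount g) • permMatrixOn (Fin D₁) g r c := by
        show _ = _ • (if r = fun a => c (g a) then (1:ℂ) else 0)
        rw [smul_eq_mul]; ring
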